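/- A complete simple game with two types of voters is weighted if and only if it is 2-trade robust. Equivalently, if M·P ≥ 1 (where M and P are the extremal slope parameters), then there exist two winning coalition types (α_1, β_1), (α_2, β_2) and two losing coalition types (γ_1, δ_1), (γ_2, δ_2) with α_1 + α_2 = γ_1 + γ_2 and β_1 + β_2 = δ_1 + δ_2. -/
import Mathlib

/-- An "M-type" pair: a winning type and a losing type, where the losing type
has `a` more voters of the first class but component sum smaller by `b`. -/
def stmt9_epPair (n1 n2 : ℕ) (Win : ℕ → ℕ → Prop) (a b : ℕ) : Prop :=
  ∃ x y x' y' : ℕ, x ≤ n1 ∧ y ≤ n2 ∧ x' ≤ n1 ∧ y' ≤ n2 ∧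
    Win x y ∧ ¬ Win x' y' ∧ x' = x + a ∧ x + y = x' + y' + b

/-- A "P-type" pair: a winning type and a losing type, where the losing type
has `c` fewer voters of the first class but component sum larger by `d`. -/
def stmt9_fpPair (n1 n2 : ℕ) (Win : ℕ → ℕ → Prop) (c d : ℕ) : Prop :=
  ∃ x y x' y' : ℕ, x ≤ n1 ∧ y ≤ n2 ∧ x' ≤ n1 ∧ y' ≤ n2 ∧
    Win x y ∧ ¬ Win x' y' ∧ x = x' + c ∧ x' + y' = x + y + d

/-- A 2-trade certificate. -/
def stmt9_hasTrade (n1 n2 : ℕ) (Win : ℕ → ℕ → Prop) : Prop :=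
  ∃ x1 y1 x2 y2 u1 v1 u2 v2 : ℕ,
    x1 ≤ n1 ∧ y1 ≤ n2 ∧ x2 ≤ n1 ∧ y2 ≤ n2 ∧
    u1 ≤ n1 ∧ v1 ≤ n2 ∧ u2 ≤ n1 ∧ v2 ≤ n2 ∧
    Win x1 y1 ∧ Win x2 y2 ∧ ¬ Win u1 v1 ∧ ¬ Win u2 v2 ∧
    x1 + x2 = u1 + u2 ∧ y1 + y2 = v1 + v2

lemma stmt9_trade_of_common {n1 n2 : ℕ} {Win : ℕ → ℕ → Prop} {t s : ℕ}
    (hE : stmt9_epPair n1 n2 Win t s) (hF : stmt9_fpPair n1 n2 Win t s) :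
    stmt9_hasTrade n1 n2 Win := by
  obtain ⟨x, y, x', y', hx, hy, hx', hy', hw, hl, hxe, hse⟩ := hE
  obtain ⟨p, q, p', q', hp, hq, hp', hq', hw2, hl2, hpe, hqe⟩ := hF
  exact ⟨x, y, p, q, x', y', p', q', hx, hy, hp, hq, hx', hy', hp', hq',
    hw, hw2, hl, hl2, by omega, by omega⟩

/-- The key combinatorial lemma: an M-type pair with slope parameters `(a, b)`
and a P-type pair with slope parameters `(c, d)` such that `b*c ≤ a*d`
(i.e. `M · P ≥ 1`) can be combined into a 2-trade certificate. -/
lemma stmt9_crux (n1 n2 : ℕ) (Win : ℕ → ℕ → Prop)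
    (hupset : ∀ x y x' y' : ℕ, x ≤ n1 → y ≤ n2 → x' ≤ x → x' + y' ≤ x + y →
      Win x' y' → Win x y) :
    ∀ m a b c d : ℕ, a + b + c + d ≤ m → 1 ≤ b → 1 ≤ c → b * c ≤ a * d →
      stmt9_epPair n1 n2 Win a b → stmt9_fpPair n1 n2 Win c d →
      stmt9_hasTrade n1 n2 Win := by
  intro m
  induction m with
  | zero => intro a b c d hm hb hc _ _ _; omega
  | succ m ih =>
    intro a b c d hm hb hc hI hE hF
    have ha : 1 ≤ a := by
      rcases Nat.eq_zero_or_pos a with h | h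
      · exfalso; subst h; simp at hI; omega
      · exact h
    have hd : 1 ≤ d := by
      rcases Nat.eq_zero_or_pos d with h | h
      · exfalso; subst h; simp at hI; omega
      · exact h
    rcases le_or_gt c a with hac | hac
    · rcases le_or_gt b d with hbd | hbd
      · -- Case 1 : c ≤ a, b ≤ d : shrink both pairs to the common vector (c, b)
        obtain ⟨k, hk⟩ : ∃ k, a = c + k := ⟨a - c, by omega⟩
        obtain ⟨x, y, x', y', hx, hy, hx', hy', hw, hl, hxe, hse⟩ := hE
        obtain ⟨p, q, p', q', hp, hq, hp', hq', hw2, hl2, hpe, hqe⟩ := hF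
        have hEcb : stmt9_epPair n1 n2 Win c b := by
          refine ⟨x, y, x + c, y' + k, hx, hy, by omega, by omega, hw, ?_, rfl, by omega⟩
          intro hwr
          exact hl (hupset x' y' (x + c) (y' + k) hx' hy' (by omega) (by omega) hwr)
        have hFcb : stmt9_fpPair n1 n2 Win c b := by
          refine ⟨p, q, p', q + c + b, hp, hq, hp', by omega, hw2, ?_, by omega, by omega⟩
          intro hwr
          exact hl2 (hupset p' q' p' (q + c + b) hp' hq' le_rfl (by omega) hwr)
        exact stmt9_trade_of_common hEcb hFcb
      · -- Case 2 : c ≤ a, d < b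
        have hca : c < a := by
          rcases Nat.lt_or_ge c a with h | h
          · exact h
          · exfalso
            have hce : a = c := by omega
            subst hce; nlinarith
        obtain ⟨k, hk⟩ : ∃ k, a = c + k := ⟨a - c, by omega⟩
        obtain ⟨j, hj⟩ : ∃ j, b = d + j := ⟨b - d, by omega⟩
        subst hk; subst hj
        obtain ⟨x, y, x', y', hx, hy, hx', hy', hw, hl, hxe, hse⟩ := hE
        by_cases hwr : Win (x + c) (y' + k + j)
        · have hE' : stmt9_epPair n1 n2 Win k j :=
            ⟨x + c, y' + k + j, x', y', by omega, by omega, hx', hy', hwr, hl,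
              by omega, by omega⟩
          exact ih k j c d (by omega) (by omega) hc (by nlinarith) hE' hF
        · have hE' : stmt9_epPair n1 n2 Win c d :=
            ⟨x, y, x + c, y' + k + j, hx, hy, by omega, by omega, hw, hwr, rfl, by omega⟩
          exact stmt9_trade_of_common hE' hF
    · -- Case 3 : a < c (then b < d)
      have hbd : b < d := by nlinarith
      obtain ⟨k, hk⟩ : ∃ k, c = a + k := ⟨c - a, by omega⟩
      obtain ⟨j, hj⟩ : ∃ j, d = b + j := ⟨d - b, by omega⟩
      subst hk; subst hj
      obtain ⟨p, q, p', q', hp, hq, hp', hq', hw2, hl2, hpe, hqe⟩ := hF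
      by_cases hwr : Win (p' + k) (q + a + b)
      · have hF' : stmt9_fpPair n1 n2 Win k j :=
          ⟨p' + k, q + a + b, p', q', by omega, by omega, hp', hq', hwr, hl2,
            by omega, by omega⟩
        exact ih a b k j (by omega) hb (by omega) (by nlinarith) hE hF'
      · have hF' : stmt9_fpPair n1 n2 Win a b :=
          ⟨p, q, p' + k, q + a + b, hp, hq, by omega, by omega, hw2, hwr,
            by omega, by omega⟩
        exact stmt9_trade_of_common hE hF'

/-- If a complete game (two types of voters) is 2-trade robust then it is weighted. -/
lemma stmt9_exists_weights (n1 n2 : ℕ) (Win : ℕ → ℕ → Prop)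
    (hupset : ∀ x y x' y' : ℕ, x ≤ n1 → y ≤ n2 → x' ≤ x → x' + y' ≤ x + y →
      Win x' y' → Win x y)
    (hR : ¬ stmt9_hasTrade n1 n2 Win) :
    ∃ w1 w2 : ℤ, w2 < w1 ∧ 0 ≤ w2 ∧
      ∀ x y x' y' : ℕ, x ≤ n1 → y ≤ n2 → x' ≤ n1 → y' ≤ n2 →
        Win x y → ¬ Win x' y' →
        0 < ((x : ℤ) - x') * w1 + ((y : ℤ) - y') * w2 := by
  classical
  set T : Finset (ℕ × ℕ) := (Finset.range (n1 + 1) ×ˢ Finset.range (n1 + n2 + 1)).filter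
      (fun ab => 1 ≤ ab.2 ∧ stmt9_epPair n1 n2 Win ab.1 ab.2) with hT
  rcases T.eq_empty_or_nonempty with hTe | hTne
  · -- no M-type pairs at all: weights (1, 0) work
    refine ⟨1, 0, by norm_num, le_rfl, ?_⟩
    intro x y x' y' hx hy hx' hy' hw hl
    have hxx : x' < x := by
      by_contra h
      push_neg at h
      have hs : x' + y' < x + y := by
        by_contra hs
        push_neg at hs
        exact hl (hupset x' y' x y hx' hy' h hs hw)
      have hmem : (x' - x, x + y - (x' + y')) ∈ T := by
        rw [hT, Finset.mem_filter, Finset.mem_product]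
        exact ⟨⟨Finset.mem_range.2 (by omega), Finset.mem_range.2 (by omega)⟩, by omega,
          ⟨x, y, x', y', hx, hy, hx', hy', hw, hl, by omega, by omega⟩⟩
      rw [hTe] at hmem
      exact absurd hmem (Finset.notMem_empty _)
    have hxx' : (x' : ℤ) < x := by exact_mod_cast hxx
    linarith
  · obtain ⟨ab, habT, hmax⟩ := T.exists_max_image (fun ab => (ab.1 : ℚ) / (ab.2 : ℚ)) hTne
    obtain ⟨a0, b0⟩ := ab
    rw [hT, Finset.mem_filter] at habT
    have hb0 : 1 ≤ b0 := habT.2.1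
    have hEab : stmt9_epPair n1 n2 Win a0 b0 := habT.2.2
    set N : ℕ := n1 + n2 + 1 with hN
    have hN1 : (1 : ℤ) ≤ (N : ℤ) := by exact_mod_cast (show 1 ≤ N by omega)
    have hb0' : (1 : ℤ) ≤ (b0 : ℤ) := by exact_mod_cast hb0
    refine ⟨(b0 : ℤ) * N + ((a0 : ℤ) * N + 1), (a0 : ℤ) * N + 1, ?_, by positivity, ?_⟩
    · nlinarith
    intro x y x' y' hx hy hx' hy' hw hl
    rcases le_or_gt x x' with hxx | hxx
    · -- M-type pair: use maximality of a0/b0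
      have hs : x' + y' < x + y := by
        by_contra hs
        push_neg at hs
        exact hl (hupset x' y' x y hx' hy' hxx hs hw)
      set a : ℕ := x' - x with hadef
      set b : ℕ := x + y - (x' + y') with hbdef
      have hmem : (a, b) ∈ T := by
        rw [hT, Finset.mem_filter, Finset.mem_product]
        exact ⟨⟨Finset.mem_range.2 (by omega), Finset.mem_range.2 (by omega)⟩, by omega,
          ⟨x, y, x', y', hx, hy, hx', hy', hw, hl, by omega, by omega⟩⟩
      have key : (a : ℚ) / (b : ℚ) ≤ (a0 : ℚ) / (b0 : ℚ) := hmax (a, b) hmem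
      have hbq : (0 : ℚ) < (b : ℚ) := by exact_mod_cast (show 0 < b by omega)
      have hb0q : (0 : ℚ) < (b0 : ℚ) := by exact_mod_cast (show 0 < b0 by omega)
      rw [div_le_div_iff₀ hbq hb0q] at key
      have keyn : a * b0 ≤ a0 * b := by exact_mod_cast key
      have keyz : (a : ℤ) * b0 ≤ (a0 : ℤ) * b := by exact_mod_cast keyn
      have key2 : (0 : ℤ) ≤ (N : ℤ) * ((a0 : ℤ) * b - (a : ℤ) * b0) :=
        mul_nonneg (by linarith) (by linarith)
      have hA : (x' : ℤ) = (x : ℤ) + a := by exact_mod_cast (show x' = x + a by omega)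
      have hB : (x : ℤ) + y = (x' : ℤ) + y' + b := by
        exact_mod_cast (show x + y = x' + y' + b by omega)
      have hb1 : (1 : ℤ) ≤ (b : ℤ) := by exact_mod_cast (show 1 ≤ b by omega)
      have hexp : ((x : ℤ) - x') * ((b0 : ℤ) * N + ((a0 : ℤ) * N + 1)) +
          ((y : ℤ) - y') * ((a0 : ℤ) * N + 1) =
          (N : ℤ) * ((a0 : ℤ) * b - (a : ℤ) * b0) + b := by
        linear_combination (-((b0 : ℤ) * N)) * hA + ((a0 : ℤ) * N + 1) * hB
      linarith
    · -- P-type pair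
      rcases le_or_gt (x' + y') (x + y) with hss | hss
      · -- component sum does not increase: easy
        have hcx : (1 : ℤ) ≤ (x : ℤ) - x' := by
          have : x' + 1 ≤ x := hxx
          have := (show ((x' : ℤ) + 1 ≤ x) by exact_mod_cast this)
          linarith
        have hsz : (0 : ℤ) ≤ ((x : ℤ) + y) - ((x' : ℤ) + y') := by
          have : (x' : ℤ) + y' ≤ (x : ℤ) + y := by exact_mod_cast hss
          linarith
        have hexp : ((x : ℤ) - x') * ((b0 : ℤ) * N + ((a0 : ℤ) * N + 1)) +
            ((y : ℤ) - y') * ((a0 : ℤ) * N + 1) =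
            (b0 : ℤ) * N * ((x : ℤ) - x') +
              ((a0 : ℤ) * N + 1) * (((x : ℤ) + y) - ((x' : ℤ) + y')) := by ring
        have h1 : (1 : ℤ) ≤ (b0 : ℤ) * N := by nlinarith
        have t1 : (b0 : ℤ) * N ≤ (b0 : ℤ) * N * ((x : ℤ) - x') :=
          le_mul_of_one_le_right (by linarith) hcx
        have t2 : (0 : ℤ) ≤ ((a0 : ℤ) * N + 1) * (((x : ℤ) + y) - ((x' : ℤ) + y')) :=
          mul_nonneg (by positivity) hsz
        linarith
      · -- component sum increases: use the crux lemma with 2-trade robustness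
        set c : ℕ := x - x' with hcdef
        set dd : ℕ := (x' + y') - (x + y) with hddef
        have hFP : stmt9_fpPair n1 n2 Win c dd :=
          ⟨x, y, x', y', hx, hy, hx', hy', hw, hl, by omega, by omega⟩
        have hkey : a0 * dd < b0 * c := by
          by_contra hcon
          push_neg at hcon
          exact hR (stmt9_crux n1 n2 Win hupset (a0 + b0 + c + dd) a0 b0 c dd le_rfl
            hb0 (by omega) hcon hEab hFP)
        have hkeyz : (a0 : ℤ) * dd + 1 ≤ (b0 : ℤ) * c := by
          exact_mod_cast (show a0 * dd + 1 ≤ b0 * c by omega)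
        have hdd : (dd : ℤ) ≤ (n1 : ℤ) + n2 := by
          exact_mod_cast (show dd ≤ n1 + n2 by omega)
        have key2 : (N : ℤ) * 1 ≤ (N : ℤ) * ((b0 : ℤ) * c - (a0 : ℤ) * dd) :=
          mul_le_mul_of_nonneg_left (by linarith) (by linarith)
        have hC : (x : ℤ) = (x' : ℤ) + c := by exact_mod_cast (show x = x' + c by omega)
        have hD : (x' : ℤ) + y' = (x : ℤ) + y + dd := by
          exact_mod_cast (show x' + y' = x + y + dd by omega)
        have hexp : ((x : ℤ) - x') * ((b0 : ℤ) * N + ((a0 : ℤ) * N + 1)) +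
            ((y : ℤ) - y') * ((a0 : ℤ) * N + 1) =
            (N : ℤ) * ((b0 : ℤ) * c - (a0 : ℤ) * dd) - dd := by
          linear_combination ((b0 : ℤ) * N) * hC + (-((a0 : ℤ) * N + 1)) * hD
        have hNval : (N : ℤ) = (n1 : ℤ) + n2 + 1 := by
          rw [hN]; push_cast; ring
        linarith

/-- A complete simple game with two types of voters is weighted iff it is
`2`-trade robust. -/
theorem stmt9 (n1 n2 : ℕ) (Win : ℕ → ℕ → Prop)
    (hupset : ∀ x y x' y' : ℕ, x ≤ n1 → y ≤ n2 → x' ≤ x → x' + y' ≤ x + y →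
      Win x' y' → Win x y) :
    (∃ w1 w2 : ℤ, w2 < w1 ∧ 0 ≤ w2 ∧
        ∀ x y x' y' : ℕ, x ≤ n1 → y ≤ n2 → x' ≤ n1 → y' ≤ n2 →
          Win x y → ¬ Win x' y' →
          0 < ((x : ℤ) - x') * w1 + ((y : ℤ) - y') * w2) ↔
      ¬ ∃ x1 y1 x2 y2 u1 v1 u2 v2 : ℕ,
          x1 ≤ n1 ∧ y1 ≤ n2 ∧ x2 ≤ n1 ∧ y2 ≤ n2 ∧
          u1 ≤ n1 ∧ v1 ≤ n2 ∧ u2 ≤ n1 ∧ v2 ≤ n2 ∧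
          Win x1 y1 ∧ Win x2 y2 ∧ ¬ Win u1 v1 ∧ ¬ Win u2 v2 ∧
          x1 + x2 = u1 + u2 ∧ y1 + y2 = v1 + v2 := by
  constructor
  · rintro ⟨w1, w2, hlt, hnn, hsep⟩
    rintro ⟨x1, y1, x2, y2, u1, v1, u2, v2, hx1, hy1, hx2, hy2, hu1, hv1, hu2, hv2,
      hW1, hW2, hL1, hL2, hxe, hye⟩
    have h1 := hsep x1 y1 u1 v1 hx1 hy1 hu1 hv1 hW1 hL1
    have h2 := hsep x2 y2 u2 v2 hx2 hy2 hu2 hv2 hW2 hL2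
    have e1 : (x1 : ℤ) + x2 = (u1 : ℤ) + u2 := by exact_mod_cast hxe
    have e2 : (y1 : ℤ) + y2 = (v1 : ℤ) + v2 := by exact_mod_cast hye
    have h3 : ((x1 : ℤ) - u1) * w1 + ((y1 : ℤ) - v1) * w2 +
        (((x2 : ℤ) - u2) * w1 + ((y2 : ℤ) - v2) * w2) = 0 := by
      linear_combination w1 * e1 + w2 * e2
    linarith
  · intro hR
    exact stmt9_exists_weights n1 n2 Win hupset hR
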